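/- arXiv:1809.07481 — 6 statements merged into one kernel-verified Lean document; each statement's English description precedes it below -/
import Mathlib

section
/- For every function f : R -> R^2 and every set s of real numbers, the total variation of f on s measured in the L1 metric on the plane equals the sum of the total variations of its two coordinate functions on s: eVariationOn f s (with f valued in WithLp 1 (R x R)) = eVariationOn (fun t => (f t).1) s + eVariationOn (fun t => (f t).2) s. -/
open Set

private lemma edist_L1 (x y : WithLp 1 (ℝ × ℝ)) :
    edist x y = edist x.ofLp.1 y.ofLp.1 + edist x.ofLp.2 y.ofLp.2 := by
  rw [WithLp.prod_edist_eq_add (by norm_num) x y]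
  norm_num

private lemma refine_sum_le {E : Type*} [PseudoEMetricSpace E] (g : ℕ → E) (φ : ℕ → ℕ)
    (hφ : Monotone φ) (n : ℕ) :
    ∑ i ∈ Finset.range n, edist (g (φ (i + 1))) (g (φ i)) ≤
      ∑ j ∈ Finset.range (φ n), edist (g (j + 1)) (g j) := by
  induction n with
  | zero => simp
  | succ n ih =>
    rw [Finset.sum_range_succ]
    have h1 : edist (g (φ (n + 1))) (g (φ n)) ≤
        ∑ j ∈ Finset.Ico (φ n) (φ (n + 1)), edist (g (j + 1)) (g j) := by
      rw [edist_comm]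
      refine (edist_le_Ico_sum_edist g (hφ (Nat.le_succ n))).trans_eq ?_
      exact Finset.sum_congr rfl fun j _ => edist_comm _ _
    calc ∑ i ∈ Finset.range n, edist (g (φ (i + 1))) (g (φ i)) + edist (g (φ (n + 1))) (g (φ n))
        ≤ ∑ j ∈ Finset.range (φ n), edist (g (j + 1)) (g j) +
          ∑ j ∈ Finset.Ico (φ n) (φ (n + 1)), edist (g (j + 1)) (g j) := add_le_add ih h1
      _ = ∑ j ∈ Finset.range (φ (n + 1)), edist (g (j + 1)) (g j) := by
          simp only [Finset.range_eq_Ico]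
          exact Finset.sum_Ico_consecutive _ (Nat.zero_le _) (hφ (Nat.le_succ n))

theorem eVariationOn_L1_eq_add_coords (f : ℝ → WithLp 1 (ℝ × ℝ)) (s : Set ℝ) :
    eVariationOn f s =
      eVariationOn (fun t => (f t).ofLp.1) s + eVariationOn (fun t => (f t).ofLp.2) s := by
  refine le_antisymm ?_ ?_
  · -- easy direction
    unfold eVariationOn
    refine iSup_le ?_
    rintro ⟨n, u, hu, us⟩
    simp only [edist_L1, Finset.sum_add_distrib]
    exact add_le_add (le_iSup_of_le ⟨n, u, hu, us⟩ le_rfl)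
      (le_iSup_of_le ⟨n, u, hu, us⟩ le_rfl)
  · rcases s.eq_empty_or_nonempty with rfl | hs
    · simp [eVariationOn.subsingleton]
  -- hard direction
    have hne : Nonempty { u : ℕ → ℝ // Monotone u ∧ ∀ i, u i ∈ s } :=
      eVariationOn.nonempty_monotone_mem hs
    unfold eVariationOn
    refine ENNReal.iSup_add_iSup_le ?_
    rintro ⟨n, u, hu, us⟩ ⟨m, v, hv, vs⟩
    -- merge u and v into a common partition
    set T : Finset ℝ := (Finset.range (n + 1)).image u ∪ (Finset.range (m + 1)).image v with hT
    have hTs : ∀ x ∈ T, x ∈ s := by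
      intro x hx
      simp only [hT, Finset.mem_union, Finset.mem_image] at hx
      rcases hx with ⟨i, _, rfl⟩ | ⟨i, _, rfl⟩
      exacts [us i, vs i]
    have huT : ∀ i, u (min i n) ∈ T := fun i => by
      simp only [hT, Finset.mem_union, Finset.mem_image]
      exact Or.inl ⟨min i n, Finset.mem_range.2 (Nat.lt_succ_of_le (min_le_right _ _)), rfl⟩
    have hvT : ∀ i, v (min i m) ∈ T := fun i => by
      simp only [hT, Finset.mem_union, Finset.mem_image]
      exact Or.inr ⟨min i m, Finset.mem_range.2 (Nat.lt_succ_of_le (min_le_right _ _)), rfl⟩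
    set N : ℕ := T.card with hN
    have hN1 : 1 ≤ N := Finset.card_pos.2 ⟨u 0, by simpa using huT 0⟩
    set e : Fin N ≃o T := T.orderIsoOfFin rfl with he
    set w : ℕ → ℝ := fun j => (e ⟨min j (N - 1), Nat.lt_of_le_of_lt (min_le_right _ _)
      (Nat.sub_lt hN1 one_pos)⟩ : ℝ) with hw
    have hwmono : Monotone w := by
      intro i j hij
      exact Subtype.coe_le_coe.2 (e.monotone (by
        simp only [Fin.mk_le_mk]
        exact min_le_min hij le_rfl))
    have hws : ∀ j, w j ∈ s := fun j => hTs _ (e _).2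
    -- index maps
    set φ : ℕ → ℕ := fun i => (e.symm ⟨u (min i n), huT i⟩ : Fin N) with hφdef
    set ψ : ℕ → ℕ := fun i => (e.symm ⟨v (min i m), hvT i⟩ : Fin N) with hψdef
    have hφ : Monotone φ := by
      intro i j hij
      exact e.symm.monotone (Subtype.mk_le_mk.2 (hu (min_le_min hij le_rfl)))
    have hψ : Monotone ψ := by
      intro i j hij
      exact e.symm.monotone (Subtype.mk_le_mk.2 (hv (min_le_min hij le_rfl)))
    have hwφ : ∀ i, w (φ i) = u (min i n) := by
      intro i
      have h1 : φ i ≤ N - 1 := Nat.le_sub_one_of_lt (e.symm ⟨u (min i n), huT i⟩).2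
      have : (⟨min (φ i) (N - 1), Nat.lt_of_le_of_lt (min_le_right _ _)
          (Nat.sub_lt hN1 one_pos)⟩ : Fin N) = e.symm ⟨u (min i n), huT i⟩ := by
        ext; exact min_eq_left h1
      simp only [hw, this, OrderIso.apply_symm_apply]
    have hwψ : ∀ i, w (ψ i) = v (min i m) := by
      intro i
      have h1 : ψ i ≤ N - 1 := Nat.le_sub_one_of_lt (e.symm ⟨v (min i m), hvT i⟩).2
      have : (⟨min (ψ i) (N - 1), Nat.lt_of_le_of_lt (min_le_right _ _)
          (Nat.sub_lt hN1 one_pos)⟩ : Fin N) = e.symm ⟨v (min i m), hvT i⟩ := by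
        ext; exact min_eq_left h1
      simp only [hw, this, OrderIso.apply_symm_apply]
    have hφN : φ n ≤ N - 1 := Nat.le_sub_one_of_lt (e.symm _).2
    have hψN : ψ m ≤ N - 1 := Nat.le_sub_one_of_lt (e.symm _).2
    -- bound coordinate sums by sums over w
    have key : ∀ (g : ℝ → ℝ) (k : ℕ) (x : ℕ → ℝ) (χ : ℕ → ℕ), Monotone χ → χ k ≤ N - 1 →
        (∀ i, w (χ i) = x (min i k)) →
        ∑ i ∈ Finset.range k, edist (g (x (i + 1))) (g (x i)) ≤
          ∑ j ∈ Finset.range (N - 1), edist (g (w (j + 1))) (g (w j)) := by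
      intro g k x χ hχ hχN hwx
      have h1 : ∑ i ∈ Finset.range k, edist (g (x (i + 1))) (g (x i)) =
          ∑ i ∈ Finset.range k, edist ((g ∘ w) (χ (i + 1))) ((g ∘ w) (χ i)) := by
        refine Finset.sum_congr rfl fun i hi => ?_
        have hik : i < k := Finset.mem_range.1 hi
        rw [Function.comp_apply, Function.comp_apply, hwx, hwx,
          min_eq_left hik.le, min_eq_left hik]
      rw [h1]
      refine (refine_sum_le (g ∘ w) χ hχ k).trans ?_
      exact Finset.sum_le_sum_of_subset (Finset.range_subset_range.2 hχN)
    calc ∑ i ∈ Finset.range n, edist ((f (u (i + 1))).ofLp.1) ((f (u i)).ofLp.1) +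
          ∑ i ∈ Finset.range m, edist ((f (v (i + 1))).ofLp.2) ((f (v i)).ofLp.2)
        ≤ ∑ j ∈ Finset.range (N - 1), edist ((f (w (j + 1))).ofLp.1) ((f (w j)).ofLp.1) +
          ∑ j ∈ Finset.range (N - 1), edist ((f (w (j + 1))).ofLp.2) ((f (w j)).ofLp.2) :=
          add_le_add (key (fun t => (f t).ofLp.1) n u φ hφ hφN hwφ)
            (key (fun t => (f t).ofLp.2) m v ψ hψ hψN hwψ)
      _ = ∑ j ∈ Finset.range (N - 1), edist (f (w (j + 1))) (f (w j)) := by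
          rw [← Finset.sum_add_distrib]
          exact Finset.sum_congr rfl fun j _ => (edist_L1 _ _).symm
      _ ≤ eVariationOn f s := eVariationOn.sum_le (f := f) hwmono hws
end

section
/- Let g : R -> R^2 be a function such that its first coordinate function t |-> (g t).1 is monotone on the interval [0,1] (either nondecreasing or nonincreasing on [0,1]) and, independently, its second coordinate function t |-> (g t).2 is monotone on [0,1]. Then the total variation of g on [0,1] in the L1 metric equals the L1 distance between its endpoint values: eVariationOn g (Icc 0 1) = ||g 1 - g 0||_1. -/
open Set

private lemma evar_neg (f : ℝ → ℝ) (s : Set ℝ) :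
    eVariationOn (fun t => -f t) s = eVariationOn f s := by
  dsimp only [eVariationOn]
  congr 1 with p : 1
  congr 1 with i : 1
  rw [edist_neg_neg]

private lemma evar_le_edist (f : ℝ → ℝ)
    (hf : MonotoneOn f (Icc 0 1) ∨ AntitoneOn f (Icc 0 1)) :
    eVariationOn f (Icc 0 1) ≤ edist (f 1) (f 0) := by
  have h0 : (0:ℝ) ∈ Icc (0:ℝ) 1 := ⟨le_refl 0, zero_le_one⟩
  have h1 : (1:ℝ) ∈ Icc (0:ℝ) 1 := ⟨zero_le_one, le_refl 1⟩
  rcases hf with hf | hf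
  · have := hf.eVariationOn_le h0 h1
    rw [Set.inter_eq_self_of_subset_left (subset_refl _)] at this
    refine this.trans_eq ?_
    rw [edist_dist, Real.dist_eq, abs_of_nonneg (sub_nonneg.2 (hf h0 h1 zero_le_one))]
  · have hm : MonotoneOn (fun t => -f t) (Icc 0 1) := hf.neg
    have := hm.eVariationOn_le h0 h1
    rw [Set.inter_eq_self_of_subset_left (subset_refl _), evar_neg] at this
    refine this.trans_eq ?_
    rw [edist_dist, Real.dist_eq]
    have : f 1 ≤ f 0 := hf h0 h1 zero_le_one
    rw [abs_of_nonpos (sub_nonpos.2 this)]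
    ring_nf

theorem eVariationOn_eq_L1_dist_of_monotone (g : ℝ → WithLp 1 (ℝ × ℝ))
    (hx : MonotoneOn (fun t => (g t).ofLp.1) (Icc 0 1) ∨ AntitoneOn (fun t => (g t).ofLp.1) (Icc 0 1))
    (hy : MonotoneOn (fun t => (g t).ofLp.2) (Icc 0 1) ∨ AntitoneOn (fun t => (g t).ofLp.2) (Icc 0 1)) :
    eVariationOn g (Icc 0 1) = (‖g 1 - g 0‖₊ : ENNReal) := by
  have h0 : (0:ℝ) ∈ Icc (0:ℝ) 1 := ⟨le_refl 0, zero_le_one⟩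
  have h1 : (1:ℝ) ∈ Icc (0:ℝ) 1 := ⟨zero_le_one, le_refl 1⟩
  have hsplit : ∀ a b : ℝ, edist (g a) (g b) = edist (g a).ofLp.1 (g b).ofLp.1 + edist (g a).ofLp.2 (g b).ofLp.2 := by
    intro a b
    rw [WithLp.prod_edist_eq_add (by norm_num)]
    simp
  have hnorm : (‖g 1 - g 0‖₊ : ENNReal) = edist (g 1) (g 0) := (edist_eq_enorm_sub _ _).symm
  rw [hnorm]
  apply le_antisymm
  · -- upper bound
    have hle : eVariationOn g (Icc 0 1) ≤
        eVariationOn (fun t => (g t).ofLp.1) (Icc 0 1) + eVariationOn (fun t => (g t).ofLp.2) (Icc 0 1) := by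
      apply iSup_le
      rintro ⟨n, u, hu, us⟩
      calc (∑ i ∈ Finset.range n, edist (g (u (i + 1))) (g (u i)))
          = (∑ i ∈ Finset.range n, edist (g (u (i + 1))).ofLp.1 (g (u i)).ofLp.1)
            + ∑ i ∈ Finset.range n, edist (g (u (i + 1))).ofLp.2 (g (u i)).ofLp.2 := by
            rw [← Finset.sum_add_distrib]
            exact Finset.sum_congr rfl fun i _ => hsplit _ _
        _ ≤ _ := add_le_add (eVariationOn.sum_le (n := n) hu us) (eVariationOn.sum_le (n := n) hu us)
    calc eVariationOn g (Icc 0 1)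
        ≤ eVariationOn (fun t => (g t).ofLp.1) (Icc 0 1) + eVariationOn (fun t => (g t).ofLp.2) (Icc 0 1) :=
          hle
      _ ≤ edist (g 1).ofLp.1 (g 0).ofLp.1 + edist (g 1).ofLp.2 (g 0).ofLp.2 :=
          add_le_add (evar_le_edist _ hx) (evar_le_edist _ hy)
      _ = edist (g 1) (g 0) := (hsplit 1 0).symm
  · exact eVariationOn.edist_le g h1 h0
end

section
/- Let S be a subset of R^2, let B be a subset of S, and let s, t be points of S. Assume that every path in S from s to t meets B, i.e., for every such path g there exists c in [0,1] with g c in B. Then d_S(s,t) = infimum over x in B of (d_S(s,x) + d_S(x,t)). -/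
open Set

noncomputable section

/-- A path in `S` from `p` to `q`: continuous on `[0,1]`, with the prescribed endpoints,
and staying in `S` on `[0,1]`. The plane carries the `L1` metric via `WithLp 1 (ℝ × ℝ)`. -/
def IsPathIn (S : Set (WithLp 1 (ℝ × ℝ))) (p q : WithLp 1 (ℝ × ℝ))
    (g : ℝ → WithLp 1 (ℝ × ℝ)) : Prop :=
  ContinuousOn g (Icc 0 1) ∧ g 0 = p ∧ g 1 = q ∧ ∀ x ∈ Icc (0:ℝ) 1, g x ∈ S

/-- The intrinsic `L1` distance in `S`: the infimum of the `L1` lengths (total variations)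
of all paths in `S` from `p` to `q` (infinity if there is no such path). -/
def dS (S : Set (WithLp 1 (ℝ × ℝ))) (p q : WithLp 1 (ℝ × ℝ)) : ENNReal :=
  ⨅ (g : ℝ → WithLp 1 (ℝ × ℝ)) (_ : IsPathIn S p q g), eVariationOn g (Icc 0 1)

lemma affine_continuous (k m : ℝ) : Continuous (fun y : ℝ => m + k * y) :=
  continuous_const.add (continuous_const.mul continuous_id)

lemma affine_image {k m u v : ℝ} (hk : 0 ≤ k) (huv : u ≤ v) :
    (fun y => m + k * y) '' Icc u v = Icc (m + k * u) (m + k * v) := by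
  apply Subset.antisymm
  · rintro _ ⟨y, hy, rfl⟩
    refine ⟨?_, ?_⟩ <;> dsimp only
    · nlinarith [mul_nonneg hk (sub_nonneg.mpr hy.1)]
    · nlinarith [mul_nonneg hk (sub_nonneg.mpr hy.2)]
  · exact intermediate_value_Icc huv (affine_continuous k m).continuousOn

lemma affine_monotone {k m : ℝ} (hk : 0 ≤ k) : Monotone (fun y : ℝ => m + k * y) := by
  intro x y h
  dsimp only
  nlinarith [mul_nonneg hk (sub_nonneg.mpr h)]

lemma dS_le_eVariationOn (S : Set (WithLp 1 (ℝ × ℝ))) (g : ℝ → WithLp 1 (ℝ × ℝ))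
    (hg : ContinuousOn g (Icc 0 1)) (hmem : ∀ x ∈ Icc (0:ℝ) 1, g x ∈ S)
    {a b : ℝ} (h0 : 0 ≤ a) (hab : a ≤ b) (h1 : b ≤ 1) :
    dS S (g a) (g b) ≤ eVariationOn g (Icc a b) := by
  set φ : ℝ → ℝ := fun y => a + (b - a) * y with hφ
  have hmono : Monotone φ := affine_monotone (by linarith)
  have himg : φ '' Icc 0 1 = Icc a b := by
    rw [hφ, affine_image (by linarith) zero_le_one]
    norm_num
  have hmaps : MapsTo φ (Icc 0 1) (Icc a b) := himg ▸ mapsTo_image φ _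
  have hsub : Icc a b ⊆ Icc (0:ℝ) 1 := Icc_subset_Icc h0 h1
  have hφ0 : φ 0 = a := by simp [hφ]
  have hφ1 : φ 1 = b := by simp [hφ]
  have hpath : IsPathIn S (g a) (g b) (g ∘ φ) := by
    refine ⟨hg.comp (affine_continuous _ _).continuousOn
      (fun x hx => hsub (hmaps hx)), ?_, ?_, fun x hx => hmem _ (hsub (hmaps hx))⟩
    · show g (φ 0) = g a
      rw [hφ0]
    · show g (φ 1) = g b
      rw [hφ1]
  calc dS S (g a) (g b) ≤ eVariationOn (g ∘ φ) (Icc 0 1) := iInf₂_le _ hpath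
    _ = eVariationOn g (Icc a b) := by
        rw [eVariationOn.comp_eq_of_monotoneOn g φ (hmono.monotoneOn _), himg]

lemma dS_concat (S : Set (WithLp 1 (ℝ × ℝ))) {p q r : WithLp 1 (ℝ × ℝ)}
    {g1 g2 : ℝ → WithLp 1 (ℝ × ℝ)} (h1 : IsPathIn S p q g1) (h2 : IsPathIn S q r g2) :
    dS S p r ≤ eVariationOn g1 (Icc 0 1) + eVariationOn g2 (Icc 0 1) := by
  -- clamp the two paths to get globally continuous maps
  set G1 : ℝ → WithLp 1 (ℝ × ℝ) := fun y => g1 (max 0 (min 1 y)) with hG1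
  set G2 : ℝ → WithLp 1 (ℝ × ℝ) := fun y => g2 (max 0 (min 1 y)) with hG2
  have hclampc : Continuous (fun y : ℝ => max 0 (min 1 y)) :=
    continuous_const.max (continuous_const.min continuous_id)
  have hclamp : ∀ y : ℝ, max 0 (min 1 y) ∈ Icc (0:ℝ) 1 :=
    fun y => ⟨le_max_left _ _, max_le zero_le_one (min_le_left _ _)⟩
  have hclamp_id : ∀ y ∈ Icc (0:ℝ) 1, max 0 (min 1 y) = y := by
    intro y hy
    rw [min_eq_right hy.2, max_eq_right hy.1]
  have hG1c : Continuous G1 := h1.1.comp_continuous hclampc hclamp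
  have hG2c : Continuous G2 := h2.1.comp_continuous hclampc hclamp
  have hG1eq : EqOn G1 g1 (Icc 0 1) := fun y hy => by rw [hG1]; simp [hclamp_id y hy]
  have hG2eq : EqOn G2 g2 (Icc 0 1) := fun y hy => by rw [hG2]; simp [hclamp_id y hy]
  have hG10 : G1 0 = p := by rw [hG1eq ⟨le_rfl, zero_le_one⟩, h1.2.1]
  have hG11 : G1 1 = q := by rw [hG1eq ⟨zero_le_one, le_rfl⟩, h1.2.2.1]
  have hG20 : G2 0 = q := by rw [hG2eq ⟨le_rfl, zero_le_one⟩, h2.2.1]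
  have hG21 : G2 1 = r := by rw [hG2eq ⟨zero_le_one, le_rfl⟩, h2.2.2.1]
  -- concatenation
  set h : ℝ → WithLp 1 (ℝ × ℝ) :=
    fun y => if y ≤ 1/2 then G1 (2 * y) else G2 (2 * y - 1) with hh
  have hcont : Continuous h := by
    rw [hh]
    refine Continuous.if_le (hG1c.comp (continuous_const.mul continuous_id))
      (hG2c.comp ((continuous_const.mul continuous_id).sub continuous_const))
      continuous_id continuous_const ?_
    intro y hy
    subst hy
    norm_num [hG11, hG20]
  have hpath : IsPathIn S p r h := by
    refine ⟨hcont.continuousOn, ?_, ?_, ?_⟩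
    · have h02 : (0:ℝ) ≤ 1/2 := by norm_num
      rw [hh]
      simp only [h02, if_true, mul_zero]
      exact hG10
    · have h12 : ¬ ((1:ℝ) ≤ 1/2) := by norm_num
      rw [hh]
      simp only [h12, if_false, mul_one]
      norm_num
      exact hG21
    · intro x hx
      rw [hh]
      by_cases hx2 : x ≤ 1/2
      · simp only [hx2, if_true]
        have hm : 2 * x ∈ Icc (0:ℝ) 1 := ⟨by linarith [hx.1], by linarith⟩
        rw [hG1eq hm]
        exact h1.2.2.2 _ hm
      · simp only [hx2, if_false]
        have hm : 2 * x - 1 ∈ Icc (0:ℝ) 1 := ⟨by push_neg at hx2; linarith, by linarith [hx.2]⟩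
        rw [hG2eq hm]
        exact h2.2.2.2 _ hm
  -- split the variation
  have e1 : eVariationOn h (Icc 0 (1/2)) = eVariationOn g1 (Icc 0 1) := by
    have heq : EqOn h (G1 ∘ (fun y => 0 + 2 * y)) (Icc 0 (1/2)) := by
      intro y hy
      rw [hh]
      simp only [hy.2, if_true, Function.comp, zero_add]
    rw [eVariationOn.eq_of_eqOn heq,
      eVariationOn.comp_eq_of_monotoneOn G1 _ ((affine_monotone (by norm_num)).monotoneOn _),
      affine_image (by norm_num : (0:ℝ) ≤ 2) (by norm_num : (0:ℝ) ≤ 1/2)]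
    norm_num
    exact eVariationOn.eq_of_eqOn hG1eq
  have e2 : eVariationOn h (Icc (1/2) 1) = eVariationOn g2 (Icc 0 1) := by
    have heq : EqOn h (G2 ∘ (fun y => -1 + 2 * y)) (Icc (1/2) 1) := by
      intro y hy
      rw [hh]
      by_cases hy2 : y ≤ 1/2
      · have hy' : y = 1/2 := le_antisymm hy2 hy.1
        subst hy'
        simp only [if_true, Function.comp]
        norm_num [hG11, hG20]
      · simp only [hy2, if_false, Function.comp]
        ring_nf
    rw [eVariationOn.eq_of_eqOn heq,
      eVariationOn.comp_eq_of_monotoneOn G2 _ ((affine_monotone (by norm_num)).monotoneOn _),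
      affine_image (by norm_num : (0:ℝ) ≤ 2) (by norm_num : (1:ℝ)/2 ≤ 1)]
    norm_num
    exact eVariationOn.eq_of_eqOn hG2eq
  have hsum := eVariationOn.Icc_add_Icc h (s := Icc 0 1) (a := 0) (b := 1/2) (c := 1)
    (by norm_num) (by norm_num) ⟨by norm_num, by norm_num⟩
  rw [inter_eq_right.mpr (Icc_subset_Icc le_rfl (by norm_num)),
    inter_eq_right.mpr (Icc_subset_Icc (by norm_num) le_rfl), inter_self] at hsum
  calc dS S p r ≤ eVariationOn h (Icc 0 1) := iInf₂_le _ hpath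
    _ = eVariationOn g1 (Icc 0 1) + eVariationOn g2 (Icc 0 1) := by rw [← hsum, e1, e2]

lemma dS_triangle (S : Set (WithLp 1 (ℝ × ℝ))) (p q r : WithLp 1 (ℝ × ℝ)) :
    dS S p r ≤ dS S p q + dS S q r := by
  have key : dS S p q + dS S q r =
      ⨅ (g1 : ℝ → WithLp 1 (ℝ × ℝ)) (_ : IsPathIn S p q g1)
        (g2 : ℝ → WithLp 1 (ℝ × ℝ)) (_ : IsPathIn S q r g2),
        (eVariationOn g1 (Icc 0 1) + eVariationOn g2 (Icc 0 1)) := by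
    rw [dS, ENNReal.iInf_add]
    refine iInf_congr fun g1 => ?_
    rw [ENNReal.iInf_add]
    refine iInf_congr fun h1 => ?_
    rw [dS, ENNReal.add_iInf]
    refine iInf_congr fun g2 => ?_
    rw [ENNReal.add_iInf]
  rw [key]
  exact le_iInf fun g1 => le_iInf fun h1 => le_iInf fun g2 => le_iInf fun h2 =>
    dS_concat S h1 h2

theorem dS_eq_iInf_through_separator (S : Set (WithLp 1 (ℝ × ℝ)))
    (B : Set (WithLp 1 (ℝ × ℝ))) (hB : B ⊆ S) (s t : WithLp 1 (ℝ × ℝ))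
    (hs : s ∈ S) (ht : t ∈ S)
    (hsep : ∀ g : ℝ → WithLp 1 (ℝ × ℝ), IsPathIn S s t g → ∃ c ∈ Icc (0:ℝ) 1, g c ∈ B) :
    dS S s t = ⨅ x ∈ B, (dS S s x + dS S x t) := by
  apply le_antisymm
  · exact le_iInf₂ fun x hx => dS_triangle S s x t
  · refine le_iInf fun g => le_iInf fun hg => ?_
    obtain ⟨c, hc, hcB⟩ := hsep g hg
    have h1 : dS S s (g c) ≤ eVariationOn g (Icc 0 c) := by
      have := dS_le_eVariationOn S g hg.1 hg.2.2.2 le_rfl hc.1 hc.2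
      rwa [hg.2.1] at this
    have h2 : dS S (g c) t ≤ eVariationOn g (Icc c 1) := by
      have := dS_le_eVariationOn S g hg.1 hg.2.2.2 hc.1 hc.2 le_rfl
      rwa [hg.2.2.1] at this
    have hsum := eVariationOn.Icc_add_Icc g (s := Icc 0 1) (a := 0) (b := c) (c := 1)
      hc.1 hc.2 hc
    rw [inter_eq_right.mpr (Icc_subset_Icc le_rfl hc.2),
      inter_eq_right.mpr (Icc_subset_Icc hc.1 le_rfl), inter_self] at hsum
    calc ⨅ x ∈ B, (dS S s x + dS S x t) ≤ dS S s (g c) + dS S (g c) t := iInf₂_le _ hcB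
      _ ≤ eVariationOn g (Icc 0 c) + eVariationOn g (Icc c 1) := add_le_add h1 h2
      _ = eVariationOn g (Icc 0 1) := hsum
end
end

section
/- Let S be a subset of R^2, let B be a convex subset of S, let t, p be points of S, and let x* be a point of B. Assume: (i) every path in S from t to p meets B; (ii) for every y in B, d_S(t,y) = d_S(t,x*) + ||x* - y||_1 (with the L1 norm coerced into extended nonnegative reals). Then d_S(t,p) = d_S(t,x*) + d_S(x*,p). -/
open Set

noncomputable section

local notation "EL" => WithLp 1 (ℝ × ℝ)

lemma dS_le_path {S : Set EL} {p q : EL} {g : ℝ → EL} (h : IsPathIn S p q g) :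
    dS S p q ≤ eVariationOn g (Icc 0 1) :=
  iInf₂_le g h

lemma var_split (g : ℝ → EL) {a b c : ℝ} (hab : a ≤ b) (hbc : b ≤ c) :
    eVariationOn g (Icc a b) + eVariationOn g (Icc b c) = eVariationOn g (Icc a c) := by
  have h := eVariationOn.Icc_add_Icc g (s := Icc a c) hab hbc ⟨hab, hbc⟩
  simp only [Icc_inter_Icc, sup_idem, inf_idem, min_eq_right hbc, max_eq_right hab,
    inter_self] at h
  exact h

/-- Reparametrizing a subinterval of a path gives a path, bounding `dS` by
the variation on the subinterval. -/
lemma dS_le_var_sub {S : Set EL} {g : ℝ → EL} {α β : ℝ}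
    (hg : ContinuousOn g (Icc 0 1)) (hmem : ∀ x ∈ Icc (0:ℝ) 1, g x ∈ S)
    (hα : α ∈ Icc (0:ℝ) 1) (hβ : β ∈ Icc (0:ℝ) 1) (hαβ : α ≤ β) :
    dS S (g α) (g β) ≤ eVariationOn g (Icc α β) := by
  set φ : ℝ → ℝ := ((β - α) * · + α) with hφ
  have hφmono : MonotoneOn φ (Icc 0 1) := by
    intro x _ y _ hxy
    have : (β - α) * x ≤ (β - α) * y :=
      mul_le_mul_of_nonneg_left hxy (by linarith)
    simpa [φ] using add_le_add_right this α
  have hmaps : MapsTo φ (Icc 0 1) (Icc α β) := by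
    intro x hx
    constructor
    · have : 0 ≤ (β - α) * x := mul_nonneg (by linarith) hx.1
      simp only [φ]; linarith
    · have : (β - α) * x ≤ (β - α) * 1 := mul_le_mul_of_nonneg_left hx.2 (by linarith)
      simp only [φ]; linarith
  have hsub : Icc α β ⊆ Icc (0:ℝ) 1 := Icc_subset_Icc hα.1 hβ.2
  have hφ0 : φ 0 = α := by simp [φ]
  have hφ1 : φ 1 = β := by simp [φ]
  have hpath : IsPathIn S (g α) (g β) (g ∘ φ) := by
    refine ⟨hg.comp ((continuous_const.mul continuous_id).add continuous_const).continuousOn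
      (fun x hx => hsub (hmaps hx)), ?_, ?_, fun x hx => hmem _ (hsub (hmaps hx))⟩
    · simp [Function.comp, hφ0]
    · simp [Function.comp, hφ1]
  refine (dS_le_path hpath).trans ?_
  rcases eq_or_lt_of_le hαβ with rfl | hlt
  · have hconst : ∀ x, (g ∘ φ) x = g α := fun x => by simp [φ, Function.comp]
    have h1 : eVariationOn (g ∘ φ) (Icc 0 1) = eVariationOn (fun _ => g α) (Icc (0:ℝ) 1) :=
      eVariationOn.eq_of_eqOn (fun x _ => hconst x)
    rw [h1, eVariationOn.constant_on]
    · exact zero_le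
    · intro u hu v hv
      obtain ⟨_, _, rfl⟩ := hu
      obtain ⟨_, _, rfl⟩ := hv
      rfl
  · rw [eVariationOn.comp_eq_of_monotoneOn g φ hφmono]
    apply le_of_eq
    congr 1
    rw [hφ, image_affine_Icc' (by linarith : (0:ℝ) < β - α)]
    norm_num

/-- Concatenating two paths. -/
lemma dS_le_concat {S : Set EL} {a b c : EL} {g₁ g₂ : ℝ → EL}
    (h₁ : IsPathIn S a b g₁) (h₂ : IsPathIn S b c g₂) :
    dS S a c ≤ eVariationOn g₁ (Icc 0 1) + eVariationOn g₂ (Icc 0 1) := by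
  obtain ⟨hc₁, h10, h11, hm₁⟩ := h₁
  obtain ⟨hc₂, h20, h21, hm₂⟩ := h₂
  set f₁ : ℝ → EL := fun x => g₁ (2 * x) with hf₁
  set f₂ : ℝ → EL := fun x => g₂ (2 * x - 1) with hf₂
  set h : ℝ → EL := fun x => if x ≤ (1:ℝ)/2 then f₁ x else f₂ x with hh
  have maps₁ : MapsTo (fun x : ℝ => 2 * x) (Icc 0 (1/2)) (Icc 0 1) := by
    intro x hx; simp only [mem_Icc] at hx ⊢; constructor <;> linarith
  have maps₂ : MapsTo (fun x : ℝ => 2 * x - 1) (Icc (1/2) 1) (Icc 0 1) := by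
    intro x hx; simp only [mem_Icc] at hx ⊢; constructor <;> linarith
  have cf₁ : ContinuousOn f₁ (Icc 0 (1/2)) :=
    hc₁.comp (continuous_const.mul continuous_id).continuousOn maps₁
  have cf₂ : ContinuousOn f₂ (Icc (1/2) 1) :=
    hc₂.comp ((continuous_const.mul continuous_id).sub continuous_const).continuousOn maps₂
  have key : f₁ (1/2) = f₂ (1/2) := by
    simp only [hf₁, hf₂]
    norm_num [h11, h20]
  have hcont : ContinuousOn h (Icc 0 1) := by
    apply ContinuousOn.if
    · intro x hx
      have h2 : x ∈ frontier (Iic ((1:ℝ)/2)) := hx.2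
      rw [frontier_Iic, mem_singleton_iff] at h2
      subst h2; exact key
    · refine cf₁.mono ?_
      intro x hx
      rcases hx with ⟨hx1, hx2⟩
      have h2 : x ∈ closure (Iic ((1:ℝ)/2)) := hx2
      rw [closure_Iic] at h2
      exact ⟨hx1.1, h2⟩
    · refine cf₂.mono ?_
      intro x hx
      rcases hx with ⟨hx1, hx2⟩
      have hset : {a : ℝ | ¬ a ≤ 1/2} = Ioi ((1:ℝ)/2) := by
        ext z; simp [not_le]
      rw [hset, closure_Ioi] at hx2
      exact ⟨hx2, hx1.2⟩
  have hpath : IsPathIn S a c h := by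
    refine ⟨hcont, ?_, ?_, ?_⟩
    · simp only [hh, hf₁]
      norm_num [h10]
    · simp only [hh, hf₂]
      norm_num [h21]
    · intro x hx
      by_cases hx2 : x ≤ 1/2
      · simp only [hh, if_pos hx2]
        exact hm₁ _ ⟨by linarith [hx.1], by linarith⟩
      · simp only [hh, if_neg hx2]
        push_neg at hx2
        exact hm₂ _ ⟨by linarith, by linarith [hx.2]⟩
  refine (dS_le_path hpath).trans ?_
  rw [← var_split h (by norm_num : (0:ℝ) ≤ 1/2) (by norm_num : (1:ℝ)/2 ≤ 1)]
  have e₁ : eVariationOn h (Icc 0 (1/2)) = eVariationOn g₁ (Icc 0 1) := by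
    have : eVariationOn h (Icc 0 (1/2)) =
        eVariationOn (g₁ ∘ (fun x : ℝ => 2 * x)) (Icc 0 (1/2)) := by
      apply eVariationOn.eq_of_eqOn
      intro x hx
      simp only [hh, if_pos hx.2, hf₁, Function.comp]
    rw [this, eVariationOn.comp_eq_of_monotoneOn g₁ _
      (fun u _ v _ huv => by linarith)]
    congr 1
    rw [show (fun x : ℝ => 2 * x) = ((2:ℝ) * · + 0) by funext x; ring,
      image_affine_Icc' (by norm_num : (0:ℝ) < 2)]
    norm_num
  have e₂ : eVariationOn h (Icc (1/2) 1) = eVariationOn g₂ (Icc 0 1) := by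
    have : eVariationOn h (Icc (1/2) 1) =
        eVariationOn (g₂ ∘ (fun x : ℝ => 2 * x - 1)) (Icc (1/2) 1) := by
      apply eVariationOn.eq_of_eqOn
      intro x hx
      by_cases hx2 : x ≤ 1/2
      · have : x = 1/2 := le_antisymm hx2 hx.1
        subst this
        simp only [hh, if_pos le_rfl, Function.comp]
        exact key
      · simp only [hh, if_neg hx2, hf₂, Function.comp]
    rw [this, eVariationOn.comp_eq_of_monotoneOn g₂ _
      (fun u _ v _ huv => by linarith)]
    congr 1
    rw [show (fun x : ℝ => 2 * x - 1) = ((2:ℝ) * · + (-1)) by funext x; ring,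
      image_affine_Icc' (by norm_num : (0:ℝ) < 2)]
    norm_num
  rw [e₁, e₂]

/-- Triangle inequality for the intrinsic distance. -/
lemma dS_triangle_s10 (S : Set EL) (a b c : EL) :
    dS S a c ≤ dS S a b + dS S b c := by
  conv_rhs => rw [dS, dS]
  simp_rw [ENNReal.iInf_add, ENNReal.add_iInf]
  exact le_iInf fun g₁ => le_iInf fun h₁ => le_iInf fun g₂ => le_iInf fun h₂ =>
    dS_le_concat h₁ h₂

/-- The straight segment between two points of a convex subset bounds the intrinsic
distance by the `L1` norm of the difference. -/
lemma dS_segment {S B : Set EL} (hBS : B ⊆ S) (hBconv : Convex ℝ B) {x y : EL}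
    (hx : x ∈ B) (hy : y ∈ B) : dS S x y ≤ (‖x - y‖₊ : ENNReal) := by
  set f : ℝ → EL := fun s => (1 - s) • x + s • y with hf
  have hlip : LipschitzWith ‖x - y‖₊ f := by
    apply LipschitzWith.of_dist_le_mul
    intro s u
    have hdiff : f s - f u = (u - s) • (x - y) := by
      simp only [hf]; module
    rw [dist_eq_norm, hdiff, norm_smul, dist_eq_norm, Real.norm_eq_abs, Real.norm_eq_abs,
      abs_sub_comm, coe_nnnorm, mul_comm]
  have hpath : IsPathIn S x y f := by
    refine ⟨(((continuous_const.sub continuous_id).smul continuous_const).add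
      (continuous_id.smul continuous_const)).continuousOn, ?_, ?_, ?_⟩
    · simp [hf]
    · simp [hf]
    · intro s hs
      exact hBS (hBconv hx hy (by linarith [hs.2]) hs.1 (by ring))
  refine (dS_le_path hpath).trans ?_
  have h1 : eVariationOn f (Icc 0 1) = eVariationOn (f ∘ id) (Icc (0:ℝ) 1) := by
    rw [Function.comp_id]
  have h2 : eVariationOn (f ∘ id) (Icc (0:ℝ) 1) ≤
      (‖x - y‖₊ : ENNReal) * eVariationOn (id : ℝ → ℝ) (Icc 0 1) :=
    hlip.lipschitzOnWith.comp_eVariationOn_le (mapsTo_univ _ _)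
  have h3 : eVariationOn (id : ℝ → ℝ) (Icc 0 1) ≤ 1 := by
    have := MonotoneOn.eVariationOn_le (f := (id : ℝ → ℝ)) (s := Icc (0:ℝ) 1)
      (fun u _ v _ huv => huv) (a := 0) (b := 1)
      (by constructor <;> norm_num) (by constructor <;> norm_num)
    rw [inter_self] at this
    simpa using this
  calc eVariationOn f (Icc 0 1) ≤ (‖x - y‖₊ : ENNReal) * eVariationOn (id : ℝ → ℝ) (Icc 0 1) := by
        rw [h1]; exact h2
    _ ≤ (‖x - y‖₊ : ENNReal) * 1 := mul_le_mul_right h3 _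
    _ = (‖x - y‖₊ : ENNReal) := mul_one _

theorem dS_through_L1_projection (S : Set (WithLp 1 (ℝ × ℝ)))
    (B : Set (WithLp 1 (ℝ × ℝ))) (hBS : B ⊆ S) (hBconv : Convex ℝ B)
    (t p : WithLp 1 (ℝ × ℝ)) (ht : t ∈ S) (hp : p ∈ S)
    (xstar : WithLp 1 (ℝ × ℝ)) (hxstar : xstar ∈ B)
    (hsep : ∀ g : ℝ → WithLp 1 (ℝ × ℝ), IsPathIn S t p g → ∃ c ∈ Icc (0:ℝ) 1, g c ∈ B)
    (hproj : ∀ y ∈ B, dS S t y = dS S t xstar + (‖xstar - y‖₊ : ENNReal)) :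
    dS S t p = dS S t xstar + dS S xstar p := by
  refine le_antisymm (dS_triangle_s10 S t xstar p) ?_
  refine le_iInf fun g => le_iInf fun hg => ?_
  obtain ⟨c, hc, hyB⟩ := hsep g hg
  obtain ⟨hgc, hg0, hg1, hgm⟩ := hg
  set y := g c with hy
  calc dS S t xstar + dS S xstar p
      ≤ dS S t xstar + (dS S xstar y + dS S y p) :=
        add_le_add_right (dS_triangle_s10 S xstar y p) _
    _ = (dS S t xstar + dS S xstar y) + dS S y p := by rw [add_assoc]
    _ ≤ (dS S t xstar + (‖xstar - y‖₊ : ENNReal)) + dS S y p :=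
        add_le_add_left (add_le_add_right (dS_segment hBS hBconv hxstar hyB) _) _
    _ = dS S t y + dS S y p := by rw [← hproj y hyB]
    _ ≤ eVariationOn g (Icc 0 c) + eVariationOn g (Icc c 1) := by
        refine add_le_add ?_ ?_
        · have := dS_le_var_sub (S := S) hgc hgm (by constructor <;> norm_num) hc hc.1
          rwa [hg0] at this
        · have := dS_le_var_sub (S := S) hgc hgm hc (by constructor <;> norm_num) hc.2
          rwa [hg1] at this
    _ = eVariationOn g (Icc 0 1) := var_split g hc.1 hc.2
end
end

section
/- Let S be a subset of R^2, let a = (ax,ay) and b = (bx,by) be points of S, and let h be a real number with h <= ay and h <= by. Assume: (i) the closed segments from a to (ax,h), from (ax,h) to (bx,h), and from (bx,h) to b are all contained in S; (ii) every path in S from a to b contains a point whose second coordinate is at most h. Then d_S(a,b) = |ax - bx| + (ay - h) + (by - h) (coerced into extended nonnegative reals). -/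
set_option maxHeartbeats 1000000
set_option linter.unusedVariables false


open Set

noncomputable section

lemma dist_L1 (x y : WithLp 1 (ℝ × ℝ)) : dist x y = |x.ofLp.1 - y.ofLp.1| + |x.ofLp.2 - y.ofLp.2| := by
  rw [WithLp.prod_dist_eq_add (by norm_num)]
  simp [Real.dist_eq, ENNReal.toReal_one]

def seg (p q : WithLp 1 (ℝ × ℝ)) (t : ℝ) : WithLp 1 (ℝ × ℝ) := p + t • (q - p)

lemma seg_zero (p q : WithLp 1 (ℝ × ℝ)) : seg p q 0 = p := by simp [seg]

lemma seg_one (p q : WithLp 1 (ℝ × ℝ)) : seg p q 1 = q := by simp [seg]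

lemma seg_cont (p q : WithLp 1 (ℝ × ℝ)) : Continuous (seg p q) := by
  unfold seg; continuity

lemma seg_mem (p q : WithLp 1 (ℝ × ℝ)) {t : ℝ} (ht : t ∈ Icc (0:ℝ) 1) :
    seg p q t ∈ segment ℝ p q := by
  rw [segment_eq_image']; exact ⟨t, ht, rfl⟩

lemma seg_lip (p q : WithLp 1 (ℝ × ℝ)) : LipschitzWith ‖q - p‖₊ (seg p q) := by
  apply LipschitzWith.of_dist_le_mul
  intro x y
  simp only [seg, dist_eq_norm, coe_nnnorm]
  have : p + x • (q - p) - (p + y • (q - p)) = (x - y) • (q - p) := by module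
  rw [this, norm_smul, Real.norm_eq_abs, mul_comm]

lemma nn_to_ofReal (p q : WithLp 1 (ℝ × ℝ)) :
    (‖q - p‖₊ : ENNReal) = ENNReal.ofReal (|q.ofLp.1 - p.ofLp.1| + |q.ofLp.2 - p.ofLp.2|) := by
  rw [← nndist_eq_nnnorm, ← edist_nndist, edist_dist, dist_L1]

lemma seg_var_le (p q : WithLp 1 (ℝ × ℝ)) (m : ℝ → ℝ) (c d : ℝ) (hm : Monotone m) :
    eVariationOn (seg p q ∘ m) (Icc c d) ≤ ‖q - p‖₊ * ENNReal.ofReal (m d - m c) := by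
  rcases le_or_gt c d with hcd | hcd
  · calc eVariationOn (seg p q ∘ m) (Icc c d)
        ≤ ‖q - p‖₊ * eVariationOn m (Icc c d) :=
          LipschitzOnWith.comp_eVariationOn_le ((seg_lip p q).lipschitzOnWith)
            (mapsTo_univ _ _)
      _ ≤ ‖q - p‖₊ * ENNReal.ofReal (m d - m c) := by
          gcongr
          have := MonotoneOn.eVariationOn_le (Monotone.monotoneOn hm univ)
            (mem_univ c) (mem_univ d)
          simpa using this
  · rw [Icc_eq_empty (not_le.mpr hcd)]
    simp

theorem staircase_path_shortest (S : Set (WithLp 1 (ℝ × ℝ)))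
    (a b : WithLp 1 (ℝ × ℝ)) (ha : a ∈ S) (hb : b ∈ S)
    (h : ℝ) (hha : h ≤ a.ofLp.2) (hhb : h ≤ b.ofLp.2)
    (hseg1 : segment ℝ a ((WithLp.equiv 1 (ℝ × ℝ)).symm (a.ofLp.1, h)) ⊆ S)
    (hseg2 : segment ℝ ((WithLp.equiv 1 (ℝ × ℝ)).symm (a.ofLp.1, h))
        ((WithLp.equiv 1 (ℝ × ℝ)).symm (b.ofLp.1, h)) ⊆ S)
    (hseg3 : segment ℝ ((WithLp.equiv 1 (ℝ × ℝ)).symm (b.ofLp.1, h)) b ⊆ S)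
    (hsep : ∀ g : ℝ → WithLp 1 (ℝ × ℝ), IsPathIn S a b g →
      ∃ c ∈ Icc (0:ℝ) 1, (g c).ofLp.2 ≤ h) :
    dS S a b = ENNReal.ofReal (|a.ofLp.1 - b.ofLp.1| + (a.ofLp.2 - h) + (b.ofLp.2 - h)) := by
  set A : WithLp 1 (ℝ × ℝ) := (WithLp.equiv 1 (ℝ × ℝ)).symm (a.ofLp.1, h) with hA
  set B : WithLp 1 (ℝ × ℝ) := (WithLp.equiv 1 (ℝ × ℝ)).symm (b.ofLp.1, h) with hB
  have hA1 : A.ofLp.1 = a.ofLp.1 := rfl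
  have hA2 : A.ofLp.2 = h := rfl
  have hB1 : B.ofLp.1 = b.ofLp.1 := rfl
  have hB2 : B.ofLp.2 = h := rfl
  apply le_antisymm
  · -- upper bound via the staircase path
    set g : ℝ → WithLp 1 (ℝ × ℝ) := fun t =>
      if t ≤ 1/3 then seg a A (3*t) else if t ≤ 2/3 then seg A B (3*t - 1) else seg B b (3*t - 2)
      with hg
    have hcont : Continuous g := by
      apply Continuous.if_le
      · exact (seg_cont a A).comp (by continuity)
      · apply Continuous.if_le
        · exact (seg_cont A B).comp (by continuity)
        · exact (seg_cont B b).comp (by continuity)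
        · exact continuous_id
        · exact continuous_const
        · intro x hx; rw [hx]; norm_num [seg_one, seg_zero]
      · exact continuous_id
      · exact continuous_const
      · intro x hx
        rw [hx]
        norm_num [seg_one, seg_zero]
    have hpath : IsPathIn S a b g := by
      refine ⟨hcont.continuousOn, ?_, ?_, ?_⟩
      · norm_num [hg, seg_zero]
      · norm_num [hg, seg_one]
      · intro x hx
        by_cases h1 : x ≤ 1/3
        · have hgx : g x = seg a A (3*x) := if_pos h1
          rw [hgx]
          exact hseg1 (seg_mem a A ⟨by linarith [hx.1], by linarith⟩)
        · by_cases h2 : x ≤ 2/3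
          · have hgx : g x = seg A B (3*x - 1) := by
              rw [hg]; simp only [if_neg h1, if_pos h2]
            rw [hgx]
            exact hseg2 (seg_mem A B ⟨by push_neg at h1; linarith, by linarith⟩)
          · have hgx : g x = seg B b (3*x - 2) := by
              rw [hg]; simp only [if_neg h1, if_neg h2]
            rw [hgx]
            exact hseg3 (seg_mem B b ⟨by push_neg at h2; linarith, by linarith [hx.2]⟩)
    have hvar : eVariationOn g (Icc 0 1) ≤
        ENNReal.ofReal (|a.ofLp.1 - b.ofLp.1| + (a.ofLp.2 - h) + (b.ofLp.2 - h)) := by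
      have split1 : eVariationOn g (Icc (0:ℝ) (1/3)) + eVariationOn g (Icc (1/3:ℝ) 1)
          = eVariationOn g (Icc (0:ℝ) 1) := by
        have := eVariationOn.Icc_add_Icc g (s := univ) (by norm_num : (0:ℝ) ≤ 1/3)
          (by norm_num : (1/3:ℝ) ≤ 1) (mem_univ _)
        simpa using this
      have split2 : eVariationOn g (Icc (1/3:ℝ) (2/3)) + eVariationOn g (Icc (2/3:ℝ) 1)
          = eVariationOn g (Icc (1/3:ℝ) 1) := by
        have := eVariationOn.Icc_add_Icc g (s := univ) (by norm_num : (1/3:ℝ) ≤ 2/3)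
          (by norm_num : (2/3:ℝ) ≤ 1) (mem_univ _)
        simpa using this
      have e1 : eVariationOn g (Icc (0:ℝ) (1/3)) ≤ ENNReal.ofReal (a.ofLp.2 - h) := by
        have heq : eVariationOn g (Icc (0:ℝ) (1/3))
            = eVariationOn (seg a A ∘ (fun t => 3*t)) (Icc (0:ℝ) (1/3)) := by
          apply eVariationOn.eq_of_eqOn
          intro x hx
          exact if_pos hx.2
        rw [heq]
        refine (seg_var_le a A _ 0 (1/3) (fun x y hxy => by show (3:ℝ)*x ≤ 3*y; linarith)).trans ?_
        rw [nn_to_ofReal, hA1, hA2]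
        rw [← ENNReal.ofReal_mul (by positivity)]
        apply ENNReal.ofReal_le_ofReal
        rw [sub_self, abs_zero, abs_of_nonpos (by linarith : h - a.ofLp.2 ≤ 0)]
        ring_nf
        linarith
      have e2 : eVariationOn g (Icc (1/3:ℝ) (2/3)) ≤ ENNReal.ofReal |a.ofLp.1 - b.ofLp.1| := by
        have heq : eVariationOn g (Icc (1/3:ℝ) (2/3))
            = eVariationOn (seg A B ∘ (fun t => 3*t - 1)) (Icc (1/3:ℝ) (2/3)) := by
          apply eVariationOn.eq_of_eqOn
          intro x hx
          by_cases hx1 : x ≤ 1/3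
          · have hx' : x = 1/3 := le_antisymm hx1 hx.1
            subst hx'
            show g (1/3) = seg A B (3*(1/3) - 1)
            rw [hg]
            norm_num [seg_one, seg_zero]
          · rw [hg]; simp only [if_neg hx1, if_pos hx.2]; rfl
        rw [heq]
        refine (seg_var_le A B _ (1/3) (2/3) (fun x y hxy => by show (3:ℝ)*x - 1 ≤ 3*y - 1; linarith)).trans ?_
        rw [nn_to_ofReal, hB1, hB2, hA1, hA2]
        rw [← ENNReal.ofReal_mul (by positivity)]
        apply ENNReal.ofReal_le_ofReal
        rw [sub_self, abs_zero, abs_sub_comm]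
        ring_nf
        linarith
      have e3 : eVariationOn g (Icc (2/3:ℝ) 1) ≤ ENNReal.ofReal (b.ofLp.2 - h) := by
        have heq : eVariationOn g (Icc (2/3:ℝ) 1)
            = eVariationOn (seg B b ∘ (fun t => 3*t - 2)) (Icc (2/3:ℝ) 1) := by
          apply eVariationOn.eq_of_eqOn
          intro x hx
          by_cases hx2 : x ≤ 2/3
          · have hx' : x = 2/3 := le_antisymm hx2 hx.1
            subst hx'
            show g (2/3) = seg B b (3*(2/3) - 2)
            rw [hg]
            norm_num [seg_one, seg_zero]
          · have hx1 : ¬ x ≤ 1/3 := by push_neg at hx2 ⊢; linarith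
            rw [hg]; simp only [if_neg hx1, if_neg hx2]; rfl
        rw [heq]
        refine (seg_var_le B b _ (2/3) 1 (fun x y hxy => by show (3:ℝ)*x - 2 ≤ 3*y - 2; linarith)).trans ?_
        rw [nn_to_ofReal, hB1, hB2]
        rw [← ENNReal.ofReal_mul (by positivity)]
        apply ENNReal.ofReal_le_ofReal
        rw [sub_self, abs_zero, abs_of_nonneg (by linarith : (0:ℝ) ≤ b.ofLp.2 - h)]
        ring_nf
        linarith
      calc eVariationOn g (Icc (0:ℝ) 1)
          = eVariationOn g (Icc (0:ℝ) (1/3)) + (eVariationOn g (Icc (1/3:ℝ) (2/3))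
              + eVariationOn g (Icc (2/3:ℝ) 1)) := by rw [split2, split1]
        _ ≤ ENNReal.ofReal (a.ofLp.2 - h) + (ENNReal.ofReal |a.ofLp.1 - b.ofLp.1|
              + ENNReal.ofReal (b.ofLp.2 - h)) := add_le_add e1 (add_le_add e2 e3)
        _ = ENNReal.ofReal (|a.ofLp.1 - b.ofLp.1| + (a.ofLp.2 - h) + (b.ofLp.2 - h)) := by
            rw [← ENNReal.ofReal_add (abs_nonneg _) (by linarith : (0:ℝ) ≤ b.ofLp.2 - h),
              ← ENNReal.ofReal_add (by linarith : (0:ℝ) ≤ a.ofLp.2 - h)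
                (by linarith [abs_nonneg (a.ofLp.1 - b.ofLp.1)] : (0:ℝ) ≤ |a.ofLp.1 - b.ofLp.1| + (b.ofLp.2 - h))]
            congr 1
            ring
    calc dS S a b ≤ eVariationOn g (Icc 0 1) := iInf₂_le g hpath
      _ ≤ _ := hvar
  · -- lower bound
    apply le_iInf₂
    intro g hg
    obtain ⟨c, hc, hch⟩ := hsep g hg
    have split : eVariationOn g (Icc (0:ℝ) c) + eVariationOn g (Icc c 1)
        = eVariationOn g (Icc (0:ℝ) 1) := by
      have := eVariationOn.Icc_add_Icc g (s := univ) hc.1 hc.2 (mem_univ _)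
      simpa using this
    have l1 : edist (g 0) (g c) ≤ eVariationOn g (Icc (0:ℝ) c) :=
      eVariationOn.edist_le g (left_mem_Icc.mpr hc.1) (right_mem_Icc.mpr hc.1)
    have l2 : edist (g c) (g 1) ≤ eVariationOn g (Icc c 1) :=
      eVariationOn.edist_le g (left_mem_Icc.mpr hc.2) (right_mem_Icc.mpr hc.2)
    rw [← split]
    refine le_trans ?_ (add_le_add l1 l2)
    rw [hg.2.1, hg.2.2.1, edist_dist, edist_dist, ← ENNReal.ofReal_add dist_nonneg dist_nonneg]
    apply ENNReal.ofReal_le_ofReal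
    rw [dist_L1, dist_L1]
    have t1 : |a.ofLp.1 - b.ofLp.1| ≤ |a.ofLp.1 - (g c).ofLp.1| + |(g c).ofLp.1 - b.ofLp.1| := abs_sub_le _ _ _
    have t2 : a.ofLp.2 - h ≤ |a.ofLp.2 - (g c).ofLp.2| := le_trans (by linarith) (le_abs_self _)
    have t3 : b.ofLp.2 - h ≤ |(g c).ofLp.2 - b.ofLp.2| := by
      rw [abs_sub_comm]
      exact le_trans (by linarith) (le_abs_self _)
    linarith
end
end

section
/- Let S be a subset of R^2 and let a, b be points of R^2. Let c = (b.1, a.2) be the corner point with the first coordinate of b and the second coordinate of a, and assume the closed segment from a to c and the closed segment from c to b are both contained in S. Then d_S(a,b) = ||a - b||_1. -/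
open Set

noncomputable section

lemma lipschitz_line (p v : WithLp 1 (ℝ × ℝ)) :
    LipschitzWith ‖v‖₊ (fun s : ℝ => p + s • v) := by
  apply LipschitzWith.of_dist_le_mul
  intro x y
  have : (p + x • v) - (p + y • v) = (x - y) • v := by module
  rw [dist_eq_norm, this, norm_smul, dist_eq_norm]
  simp [Real.norm_eq_abs, mul_comm]

lemma evar_affine (p v : WithLp 1 (ℝ × ℝ)) (φ : ℝ → ℝ) (x y : ℝ) (hxy : x ≤ y)
    (hφ : MonotoneOn φ (Icc x y)) :
    eVariationOn (fun t => p + φ t • v) (Icc x y) ≤ ‖v‖₊ * ENNReal.ofReal (φ y - φ x) := by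
  have h1 : eVariationOn ((fun s : ℝ => p + s • v) ∘ φ) (Icc x y)
      ≤ ‖v‖₊ * eVariationOn φ (Icc x y) :=
    (lipschitz_line p v).lipschitzOnWith.comp_eVariationOn_le (mapsTo_univ _ _)
  have h2 : eVariationOn φ (Icc x y) ≤ ENNReal.ofReal (φ y - φ x) := by
    have := hφ.eVariationOn_le (a := x) (b := y) (left_mem_Icc.2 hxy) (right_mem_Icc.2 hxy)
    rwa [inter_self] at this
  exact h1.trans (mul_le_mul_right h2 _)

theorem L_shaped_path_shortest (S : Set (WithLp 1 (ℝ × ℝ))) (a b : WithLp 1 (ℝ × ℝ))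
    (hseg1 : segment ℝ a ((WithLp.equiv 1 (ℝ × ℝ)).symm (b.ofLp.1, a.ofLp.2)) ⊆ S)
    (hseg2 : segment ℝ ((WithLp.equiv 1 (ℝ × ℝ)).symm (b.ofLp.1, a.ofLp.2)) b ⊆ S) :
    dS S a b = (‖a - b‖₊ : ENNReal) := by
  set c : WithLp 1 (ℝ × ℝ) := (WithLp.equiv 1 (ℝ × ℝ)).symm (b.ofLp.1, a.ofLp.2) with hc
  have hkey : (‖c - a‖₊ : ENNReal) + ‖b - c‖₊ = ‖a - b‖₊ := by
    have h1 : ‖c - a‖ = |b.ofLp.1 - a.ofLp.1| := by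
      have : (c - a).fst = b.ofLp.1 - a.ofLp.1 ∧ (c - a).snd = 0 := ⟨rfl, sub_self a.ofLp.2⟩
      rw [WithLp.prod_norm_eq_of_nat 1 (by norm_num) _, this.1, this.2]
      simp [Real.norm_eq_abs]
    have h2 : ‖b - c‖ = |b.ofLp.2 - a.ofLp.2| := by
      have : (b - c).fst = 0 ∧ (b - c).snd = b.ofLp.2 - a.ofLp.2 := ⟨sub_self b.ofLp.1, rfl⟩
      rw [WithLp.prod_norm_eq_of_nat 1 (by norm_num) _, this.1, this.2]
      simp [Real.norm_eq_abs]
    have h3 : ‖a - b‖ = |a.ofLp.1 - b.ofLp.1| + |a.ofLp.2 - b.ofLp.2| := by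
      have : (a - b).fst = a.ofLp.1 - b.ofLp.1 ∧ (a - b).snd = a.ofLp.2 - b.ofLp.2 := by constructor <;> rfl
      rw [WithLp.prod_norm_eq_of_nat 1 (by norm_num) _, this.1, this.2]
      simp [Real.norm_eq_abs]
    rw [← ENNReal.coe_add]
    norm_cast
    ext
    push_cast [coe_nnnorm]
    rw [h1, h2, h3, abs_sub_comm b.ofLp.1 a.ofLp.1, abs_sub_comm b.ofLp.2 a.ofLp.2]
  apply le_antisymm
  · -- upper bound via the L-shaped path
    set g : ℝ → WithLp 1 (ℝ × ℝ) :=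
      fun t => if t ≤ 1/2 then a + (2*t) • (c - a) else c + (2*t - 1) • (b - c) with hg
    have hg0 : g 0 = a := by simp [hg]
    have hg1 : g 1 = b := by norm_num [hg]
    have ghalf : ∀ t : ℝ, t = 1/2 → g t = c := by
      intro t ht; subst ht; norm_num [hg]
    have heq1 : EqOn g (fun t => a + (2*t) • (c - a)) (Icc 0 (1/2)) := by
      intro t ht; simp only [hg, if_pos ht.2]
    have heq2 : EqOn g (fun t => c + (2*t - 1) • (b - c)) (Icc (1/2) 1) := by
      intro t ht
      rcases eq_or_lt_of_le ht.1 with h | h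
      · rw [ghalf t h.symm]; rw [← h]; norm_num
      · simp only [hg, if_neg (not_le.2 h)]
    have hcont : ContinuousOn g (Icc 0 1) := by
      apply Continuous.continuousOn
      apply Continuous.if_le
      · fun_prop
      · fun_prop
      · exact continuous_id
      · exact continuous_const
      · intro x hx; subst hx; norm_num
    have hmem : ∀ x ∈ Icc (0:ℝ) 1, g x ∈ S := by
      intro x hx
      by_cases h : x ≤ 1/2
      · apply hseg1
        rw [heq1 ⟨hx.1, h⟩, segment_eq_image']
        exact ⟨2*x, ⟨by linarith [hx.1], by linarith⟩, rfl⟩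
      · apply hseg2
        push_neg at h
        rw [heq2 ⟨h.le, hx.2⟩, segment_eq_image']
        exact ⟨2*x - 1, ⟨by linarith, by linarith [hx.2]⟩, rfl⟩
    have hpath : IsPathIn S a b g := ⟨hcont, hg0, hg1, hmem⟩
    have hbound : eVariationOn g (Icc 0 1) ≤ (‖a - b‖₊ : ENNReal) := by
      have hsplit : eVariationOn g (Icc 0 (1/2)) + eVariationOn g (Icc (1/2) 1)
          = eVariationOn g (Icc 0 1) := by
        have := eVariationOn.Icc_add_Icc g (s := univ) (a := (0:ℝ)) (b := 1/2) (c := 1)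
          (by norm_num) (by norm_num) (mem_univ _)
        simpa using this
      rw [← hsplit]
      have hv1 : eVariationOn g (Icc 0 (1/2)) ≤ (‖c - a‖₊ : ENNReal) := by
        rw [eVariationOn.eq_of_eqOn heq1]
        have := evar_affine a (c - a) (fun t => 2*t) 0 (1/2) (by norm_num)
          (fun u _ v _ huv => by dsimp; linarith)
        simpa using this
      have hv2 : eVariationOn g (Icc (1/2) 1) ≤ (‖b - c‖₊ : ENNReal) := by
        rw [eVariationOn.eq_of_eqOn heq2]
        have := evar_affine c (b - c) (fun t => 2*t - 1) (1/2) 1 (by norm_num)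
          (fun u _ v _ huv => by dsimp; linarith)
        rw [show (2*(1:ℝ) - 1 - (2*(1/2) - 1)) = 1 by norm_num] at this
        simpa using this
      calc eVariationOn g (Icc 0 (1/2)) + eVariationOn g (Icc (1/2) 1)
          ≤ (‖c - a‖₊ : ENNReal) + ‖b - c‖₊ := add_le_add hv1 hv2
        _ = ‖a - b‖₊ := hkey
    exact (iInf₂_le g hpath).trans hbound
  · -- lower bound
    refine le_iInf₂ fun g hg => ?_
    have := eVariationOn.edist_le g (s := Icc (0:ℝ) 1)
      (left_mem_Icc.2 (by norm_num)) (right_mem_Icc.2 (by norm_num))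
    rw [hg.2.1, hg.2.2.1, edist_eq_enorm_sub] at this
    exact this
end
end
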